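/- Consider the ℂ×-action on the complex projective line ℙ¹(ℂ) given by t · [x : y] = [t x : t⁻¹ y], and let A = {[1:0], [0:1]} be the set of fixed points. Then A is weakly attractive at zero (for every neighborhood W of A and every point x ∈ ℙ¹ there is s > 0 with t·x ∈ W for all 0 < |t| ≤ s), but A is not strongly attractive at zero (there exist a neighborhood W of A and a point x such that no neighborhood U of x satisfies t·U ⊆ W for all sufficiently small |t|). -/

import Mathlib

open Projectivization

noncomputable instance : TopologicalSpace (Projectivization ℂ (Fin 2 → ℂ)) :=
  inferInstanceAs (TopologicalSpace (Quotient (projectivizationSetoid ℂ (Fin 2 → ℂ))))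

/-- The diagonal linear map `(x, y) ↦ (t x, t⁻¹ y)` on `ℂ²`. -/
noncomputable def dMap (t : ℂˣ) : (Fin 2 → ℂ) →ₗ[ℂ] (Fin 2 → ℂ) where
  toFun v := fun i => (![(t : ℂ), ((t⁻¹ : ℂˣ) : ℂ)] i) * v i
  map_add' u v := by funext i; simp [mul_add]
  map_smul' a v := by funext i; simp [smul_eq_mul]; ring

theorem dMap_injective (t : ℂˣ) : Function.Injective (dMap t) := by
  intro u v h
  funext i
  have hc : (![(t : ℂ), ((t⁻¹ : ℂˣ) : ℂ)] i) ≠ 0 := by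
    fin_cases i <;> simp
  have := congrFun h i
  exact mul_left_cancel₀ hc this

/-- The `ℂ×`-action `t · [x : y] = [t x : t⁻¹ y]` on `ℙ¹(ℂ)`. -/
noncomputable def pAct (t : ℂˣ) : Projectivization ℂ (Fin 2 → ℂ) → Projectivization ℂ (Fin 2 → ℂ) :=
  Projectivization.map (dMap t) (dMap_injective t)

/-- The fixed point `[1 : 0]`. -/
noncomputable def pt10 : Projectivization ℂ (Fin 2 → ℂ) :=
  Projectivization.mk ℂ ![1, 0] (by intro h; have := congrFun h 0; simp at this)

/-- The fixed point `[0 : 1]`. -/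
noncomputable def pt01 : Projectivization ℂ (Fin 2 → ℂ) :=
  Projectivization.mk ℂ ![0, 1] (by intro h; have := congrFun h 1; simp at this)

/-! ### Auxiliary lemmas -/

lemma vne_fst {a b : ℂ} (ha : a ≠ 0) : ![a, b] ≠ (0 : Fin 2 → ℂ) :=
  fun h => ha (by simpa using congrFun h 0)

lemma vne_snd {a b : ℂ} (hb : b ≠ 0) : ![a, b] ≠ (0 : Fin 2 → ℂ) :=
  fun h => hb (by simpa using congrFun h 1)

lemma mk2_eq_mk2 {a b c d : ℂ} (hab : ![a, b] ≠ 0) (hcd : ![c, d] ≠ 0) (u : ℂˣ)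
    (h0 : (u : ℂ) * c = a) (h1 : (u : ℂ) * d = b) :
    Projectivization.mk ℂ ![a, b] hab = Projectivization.mk ℂ ![c, d] hcd := by
  refine (mk_eq_mk_iff ℂ _ _ hab hcd).2 ⟨u, funext fun i => ?_⟩
  fin_cases i <;> simp [Units.smul_def, h0, h1]

lemma pAct_mk (t : ℂˣ) (a b : ℂ) (h : ![a, b] ≠ 0)
    (h' : ![(t : ℂ) * a, (t : ℂ)⁻¹ * b] ≠ 0) :
    pAct t (Projectivization.mk ℂ ![a, b] h) =
      Projectivization.mk ℂ ![(t : ℂ) * a, (t : ℂ)⁻¹ * b] h' := by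
  rw [pAct, Projectivization.map_mk]
  refine (mk_eq_mk_iff ℂ _ _ _ h').2 ⟨1, funext fun i => ?_⟩
  fin_cases i <;> simp [dMap, Units.val_inv_eq_inv_val]

lemma cont_mk2 {f g : ℂ → ℂ} (hf : Continuous f) (hg : Continuous g)
    (h : ∀ c, ![f c, g c] ≠ (0 : Fin 2 → ℂ)) :
    Continuous fun c => Projectivization.mk ℂ ![f c, g c] (h c) := by
  have h1 : Continuous fun c => (⟨![f c, g c], h c⟩ : {v : Fin 2 → ℂ // v ≠ 0}) := by
    refine Continuous.subtype_mk ?_ _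
    refine continuous_pi fun i => ?_
    fin_cases i <;> simpa
  exact Continuous.comp
    (continuous_quotient_mk' (s := projectivizationSetoid ℂ (Fin 2 → ℂ))) h1

/-- The equator point `[1 : 1]`. -/
noncomputable def pt11 : Projectivization ℂ (Fin 2 → ℂ) :=
  Projectivization.mk ℂ ![1, 1] (vne_fst one_ne_zero)

lemma isClosed_pt11 : IsClosed ({pt11} : Set (Projectivization ℂ (Fin 2 → ℂ))) := by
  letI : Setoid {v : Fin 2 → ℂ // v ≠ 0} := projectivizationSetoid ℂ (Fin 2 → ℂ)
  apply (Topology.IsCoinducing.isClosed_preimage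
    (isQuotientMap_quotient_mk' (s := projectivizationSetoid ℂ (Fin 2 → ℂ))).isCoinducing).mp
  have : (Quotient.mk' ⁻¹' ({pt11} : Set (Projectivization ℂ (Fin 2 → ℂ))) : Set {v : Fin 2 → ℂ // v ≠ 0}) =
      {v : {v : Fin 2 → ℂ // v ≠ 0} | v.1 0 = v.1 1} := by
    ext ⟨v, hv⟩
    simp only [Set.mem_preimage, Set.mem_singleton_iff, Set.mem_setOf_eq]
    change (Quotient.mk' ⟨v, hv⟩ : Projectivization ℂ (Fin 2 → ℂ)) = pt11 ↔ v 0 = v 1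
    have : (Quotient.mk' ⟨v, hv⟩ : Projectivization ℂ (Fin 2 → ℂ)) =
        Projectivization.mk ℂ v hv := rfl
    rw [this, pt11]; refine (mk_eq_mk_iff _ _ _ _ _).trans ?_
    constructor
    · rintro ⟨u, hu⟩
      have h0 := congrFun hu.symm 0
      have h1 := congrFun hu.symm 1
      simp at h0 h1
      rw [h0, h1]
    · intro hv01
      have hv0 : v 0 ≠ 0 := by
        intro h0
        apply hv
        funext i
        fin_cases i
        · simpa using h0
        · simpa using hv01 ▸ h0
      refine ⟨Units.mk0 (v 0) hv0, funext fun i => ?_⟩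
      fin_cases i <;> simp [hv01]
  rw [this]
  exact isClosed_eq ((continuous_apply 0).comp continuous_subtype_val)
    ((continuous_apply 1).comp continuous_subtype_val)

lemma pt10_ne_pt11 : pt10 ≠ pt11 := by
  intro hc
  rw [pt10, pt11, mk_eq_mk_iff] at hc
  obtain ⟨u, hu⟩ := hc
  have := congrFun hu 1
  simp [Units.smul_def] at this

lemma pt01_ne_pt11 : pt01 ≠ pt11 := by
  intro hc
  rw [pt01, pt11, mk_eq_mk_iff] at hc
  obtain ⟨u, hu⟩ := hc
  have := congrFun hu 0
  simp [Units.smul_def] at this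

theorem p1_fixed_points_weakly_not_strongly_attractive :
    -- weakly attractive at zero
    (∀ W ∈ nhdsSet ({pt10, pt01} : Set (Projectivization ℂ (Fin 2 → ℂ))),
      ∀ x : Projectivization ℂ (Fin 2 → ℂ), ∃ s > (0 : ℝ), ∀ t : ℂˣ,
        0 < ‖(t : ℂ)‖ → ‖(t : ℂ)‖ ≤ s → pAct t x ∈ W) ∧
    -- but not strongly attractive at zero
    ¬ (∀ W ∈ nhdsSet ({pt10, pt01} : Set (Projectivization ℂ (Fin 2 → ℂ))),
      ∀ x : Projectivization ℂ (Fin 2 → ℂ), ∃ U ∈ nhds x, ∃ s > (0 : ℝ), ∀ t : ℂˣ,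
        0 < ‖(t : ℂ)‖ → ‖(t : ℂ)‖ ≤ s → ∀ u ∈ U, pAct t u ∈ W) := by
  constructor
  · -- weak attractiveness
    intro W hW x
    induction x using Projectivization.ind with
    | h v hv =>
    by_cases hv1 : v 1 = 0
    · -- x = pt10, which is fixed
      have hv0 : v 0 ≠ 0 := by
        intro h0
        apply hv
        funext i
        fin_cases i <;> simp [h0, hv1]
      have hx : Projectivization.mk ℂ v hv = pt10 := by
        have hveq : v = ![v 0, v 1] := by funext i; fin_cases i <;> rfl
        rw [show Projectivization.mk ℂ v hv
            = Projectivization.mk ℂ ![v 0, v 1] (hveq ▸ hv) by congr 1]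
        exact mk2_eq_mk2 _ _ (Units.mk0 (v 0) hv0) (by simp) (by simp [hv1])
      refine ⟨1, one_pos, fun t ht hts => ?_⟩
      rw [hx, pt10, pAct_mk t 1 0 _ (vne_fst (by simp [t.ne_zero]))]
      have : Projectivization.mk ℂ ![(t : ℂ) * 1, (t : ℂ)⁻¹ * 0]
          (vne_fst (by simp [t.ne_zero])) = pt10 :=
        mk2_eq_mk2 _ _ t (by simp) (by simp)
      rw [this]
      exact subset_of_mem_nhdsSet hW (by simp)
    · -- x = [a : 1] flows to pt01
      set a : ℂ := v 0 / v 1 with ha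
      have hx : Projectivization.mk ℂ v hv
          = Projectivization.mk ℂ ![a, 1] (vne_snd one_ne_zero) := by
        have hveq : v = ![v 0, v 1] := by funext i; fin_cases i <;> rfl
        rw [show Projectivization.mk ℂ v hv
            = Projectivization.mk ℂ ![v 0, v 1] (hveq ▸ hv) by congr 1]
        exact mk2_eq_mk2 _ _ (Units.mk0 (v 1) hv1) (by field_simp [ha]; simp [ha, mul_div_cancel₀ _ hv1]) (by simp)
      have hW01 : W ∈ nhds pt01 := by
        rw [mem_nhdsSet_iff_forall] at hW
        exact hW pt01 (by simp)
      have hne : ∀ c : ℂ, ![c, (1 : ℂ)] ≠ (0 : Fin 2 → ℂ) := fun c => vne_snd one_ne_zero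
      have hcont : Continuous fun c : ℂ => Projectivization.mk ℂ ![c, 1] (hne c) :=
        cont_mk2 continuous_id continuous_const hne
      have h0 : Projectivization.mk ℂ ![(0 : ℂ), 1] (hne 0) = pt01 := rfl
      have hmem : (fun c : ℂ => Projectivization.mk ℂ ![c, 1] (hne c)) ⁻¹' W ∈ nhds 0 :=
        hcont.continuousAt.preimage_mem_nhds (by rw [h0]; exact hW01)
      obtain ⟨ε, hε, hball⟩ := Metric.mem_nhds_iff.mp hmem
      refine ⟨min 1 (ε / (2 * (‖a‖ + 1))), by positivity, fun t ht hts => ?_⟩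
      have hnt1 : ‖(t : ℂ)‖ ≤ 1 := hts.trans (min_le_left _ _)
      have hnt2 : ‖(t : ℂ)‖ ≤ ε / (2 * (‖a‖ + 1)) := hts.trans (min_le_right _ _)
      have hnt2' : ‖(t : ℂ)‖ * (2 * (‖a‖ + 1)) ≤ ε :=
        (le_div_iff₀ (by positivity)).mp hnt2
      have hsmall : ‖(t : ℂ) ^ 2 * a‖ < ε := by
        rw [norm_mul, norm_pow]
        nlinarith [norm_nonneg a, norm_nonneg (t : ℂ)]
      have hstep : pAct t (Projectivization.mk ℂ ![a, 1] (vne_snd one_ne_zero))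
          = Projectivization.mk ℂ ![(t : ℂ) ^ 2 * a, 1] (hne _) := by
        rw [pAct_mk t a 1 _ (vne_snd (by simp [t.ne_zero]))]
        refine mk2_eq_mk2 _ _ t⁻¹ ?_ ?_
        · rw [Units.val_inv_eq_inv_val]
          field_simp [t.ne_zero]
        · simp [Units.val_inv_eq_inv_val]
      rw [hx, hstep]
      exact hball (by simpa [Metric.mem_ball] using hsmall)
  · -- not strongly attractive
    intro H
    have hWnhds : ({pt11}ᶜ : Set (Projectivization ℂ (Fin 2 → ℂ)))
        ∈ nhdsSet ({pt10, pt01} : Set (Projectivization ℂ (Fin 2 → ℂ))) := by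
      refine isClosed_pt11.isOpen_compl.mem_nhdsSet.mpr ?_
      intro z hz
      rcases hz with h | h <;> subst h <;> simp [pt10_ne_pt11, pt01_ne_pt11]
    obtain ⟨U, hU, s, hs, hH⟩ := H _ hWnhds pt10
    have hne : ∀ c : ℂ, ![(1 : ℂ), c] ≠ (0 : Fin 2 → ℂ) := fun c => vne_fst one_ne_zero
    have hcont : Continuous fun c : ℂ => Projectivization.mk ℂ ![1, c] (hne c) :=
      cont_mk2 continuous_const continuous_id hne
    have h0 : Projectivization.mk ℂ ![(1 : ℂ), 0] (hne 0) = pt10 := rfl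
    have hmem : (fun c : ℂ => Projectivization.mk ℂ ![1, c] (hne c)) ⁻¹' U ∈ nhds 0 :=
      hcont.continuousAt.preimage_mem_nhds (by rw [h0]; exact hU)
    obtain ⟨ε, hε, hball⟩ := Metric.mem_nhds_iff.mp hmem
    set r : ℝ := min s (min 1 ε) / 2 with hrdef
    have hr : 0 < r := by positivity
    have hrs : r ≤ s := by
      have := min_le_left s (min 1 ε); simp only [hrdef]; linarith
    have hr1 : r ≤ 1 := by
      have := (min_le_right s (min 1 ε)).trans (min_le_left 1 ε)
      simp only [hrdef]; linarith
    have hrε : r ^ 2 < ε := by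
      have h1 := (min_le_right s (min 1 ε)).trans (min_le_right 1 ε)
      nlinarith
    set t : ℂˣ := Units.mk0 ((r : ℝ) : ℂ) (by exact_mod_cast hr.ne') with htdef
    have hnt : ‖(t : ℂ)‖ = r := by
      simp [htdef, Complex.norm_real, abs_of_pos hr]
    have hu : Projectivization.mk ℂ ![1, (t : ℂ) ^ 2] (hne _) ∈ U := by
      apply hball
      simp only [Metric.mem_ball, dist_zero_right]
      have : ((t : ℂ)) = ((r : ℝ) : ℂ) := rfl
      rw [this, ← Complex.ofReal_pow, Complex.norm_real]
      rw [Real.norm_eq_abs, abs_of_pos (by positivity)]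
      exact hrε
    have hcontra := hH t (by rw [hnt]; exact hr) (by rw [hnt]; exact hrs) _ hu
    apply hcontra
    have : pAct t (Projectivization.mk ℂ ![1, (t : ℂ) ^ 2] (hne _)) = pt11 := by
      rw [pAct_mk t 1 ((t : ℂ) ^ 2) _
        (vne_fst (by simp [t.ne_zero]))]
      refine mk2_eq_mk2 _ _ t (by simp) ?_
      field_simp [t.ne_zero]
    simp [this]
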